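/- arXiv:1806.10262 — 4 statements merged into one kernel-verified Lean document; each statement's English description precedes it below -/
import Mathlib

section
/- For every real number β with 1 < β < 2, the series ∑_{k=0}^{∞} ω_k^{(β)} converges and its sum equals 0. -/
open scoped Matrix

/-- The coefficients `g_k^{(β)}`. -/
noncomputable def gcoef (β : ℝ) : ℕ → ℝ
  | 0 => 1
  | k + 1 => (1 - (β + 1) / ((k : ℝ) + 1)) * gcoef β k

/-- The WSGD coefficients `ω_k^{(β)}`. -/
noncomputable def w (β : ℝ) : ℕ → ℝ
  | 0 => β / 2 * gcoef β 0
  | k + 1 => β / 2 * gcoef β (k + 1) + (2 - β) / 2 * gcoef β k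

lemma gcoef_succ_def (β : ℝ) (n : ℕ) :
    gcoef β (n + 1) = (1 - (β + 1) / ((n : ℝ) + 1)) * gcoef β n := rfl

lemma gcoef_shift (β : ℝ) (n : ℕ) :
    gcoef β (n + 1) = -β / ((n : ℝ) + 1) * gcoef (β - 1) n := by
  induction n with
  | zero => simp [gcoef]
  | succ n ih =>
    rw [gcoef_succ_def, ih, gcoef_succ_def]
    have h1 : ((n : ℝ) + 1) ≠ 0 := by positivity
    have h2 : ((n : ℝ) + 1 + 1) ≠ 0 := by positivity
    push_cast
    field_simp
    ring

lemma gcoef_eq_sub (β : ℝ) (n : ℕ) :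
    gcoef β (n + 1) = gcoef (β - 1) (n + 1) - gcoef (β - 1) n := by
  rw [gcoef_shift, gcoef_succ_def]
  have h1 : ((n : ℝ) + 1) ≠ 0 := by positivity
  field_simp
  ring

lemma gcoef_abs_le (β : ℝ) (hβ1 : 1 < β) (hβ2 : β < 2) (n : ℕ) :
    |gcoef (β - 1) (n + 1)| ≤ (β - 1) / ((n : ℝ) + 1) := by
  induction n with
  | zero =>
    have : gcoef (β - 1) 1 = -(β - 1) := by
      rw [gcoef_succ_def]; simp [gcoef]
    rw [this, abs_neg, abs_of_nonneg (by linarith)]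
    norm_num
  | succ n ih =>
    rw [gcoef_succ_def]
    push_cast
    have hβn : β - 1 + 1 = β := by ring
    rw [hβn]
    have hpos : (0:ℝ) ≤ 1 - β / ((n : ℝ) + 1 + 1) := by
      have h2 : (0:ℝ) < (n : ℝ) + 1 + 1 := by positivity
      rw [sub_nonneg, div_le_one h2]
      have : (0:ℝ) ≤ (n:ℝ) := Nat.cast_nonneg n
      linarith
    rw [abs_mul, abs_of_nonneg hpos]
    calc (1 - β / ((n : ℝ) + 1 + 1)) * |gcoef (β - 1) (n + 1)|
        ≤ (1 - β / ((n : ℝ) + 1 + 1)) * ((β - 1) / ((n : ℝ) + 1)) :=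
          mul_le_mul_of_nonneg_left ih hpos
      _ ≤ (β - 1) / ((n : ℝ) + 1 + 1) := by
          have h1 : (0:ℝ) < (n : ℝ) + 1 := by positivity
          have h2 : (0:ℝ) < (n : ℝ) + 1 + 1 := by positivity
          have ha : 1 - β / ((n : ℝ) + 1 + 1) = ((n : ℝ) + 1 + 1 - β) / ((n : ℝ) + 1 + 1) := by
            field_simp
          rw [ha, div_mul_div_comm, div_le_div_iff₀ (by positivity) h2]
          nlinarith [mul_nonneg (sq_nonneg (β - 1)) h2.le]

lemma gcoefm_tendsto (β : ℝ) (hβ1 : 1 < β) (hβ2 : β < 2) :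
    Filter.Tendsto (fun n : ℕ => gcoef (β - 1) n) Filter.atTop (nhds 0) := by
  rw [← Filter.tendsto_add_atTop_iff_nat 1]
  apply squeeze_zero_norm (fun n => gcoef_abs_le β hβ1 hβ2 n)
  have htop : Filter.Tendsto (fun n : ℕ => (n : ℝ) + 1) Filter.atTop Filter.atTop :=
    Filter.tendsto_atTop_add_const_right _ _ tendsto_natCast_atTop_atTop
  exact Filter.Tendsto.div_atTop tendsto_const_nhds htop

lemma summable_gcoef (β : ℝ) (hβ1 : 1 < β) (hβ2 : β < 2) :
    Summable (fun k : ℕ => gcoef β k) := by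
  rw [← summable_nat_add_iff 2]
  apply Summable.of_abs
  have hbound : ∀ k : ℕ, |gcoef β (k + 2)| ≤ 2 * (1 / ((k : ℝ) + 1) ^ 2) := by
    intro k
    have h1 : (0:ℝ) < (k : ℝ) + 1 := by positivity
    have h2 : (0:ℝ) < (k : ℝ) + 1 + 1 := by positivity
    have := gcoef_abs_le β hβ1 hβ2 k
    rw [show k + 2 = (k + 1) + 1 from rfl, gcoef_shift]
    push_cast
    rw [abs_mul, abs_div, abs_neg, abs_of_nonneg (by linarith : (0:ℝ) ≤ β),
      abs_of_nonneg (by positivity : (0:ℝ) ≤ (k:ℝ) + 1 + 1)]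
    calc β / ((k : ℝ) + 1 + 1) * |gcoef (β - 1) (k + 1)|
        ≤ β / ((k : ℝ) + 1 + 1) * ((β - 1) / ((k : ℝ) + 1)) := by
          apply mul_le_mul_of_nonneg_left this (by positivity)
      _ ≤ 2 * (1 / ((k : ℝ) + 1) ^ 2) := by
          rw [div_mul_div_comm, div_le_iff₀ (by positivity)]
          have hb : β * (β - 1) ≤ 2 * 1 := by nlinarith
          have : ((k:ℝ)+1)^2 ≤ ((k:ℝ)+1+1) * ((k:ℝ)+1) := by nlinarith
          calc β * (β - 1) ≤ 2 := by nlinarith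
            _ ≤ 2 * (1 / ((k : ℝ) + 1) ^ 2) * (((k:ℝ)+1+1) * ((k:ℝ)+1)) := by
                rw [mul_assoc, le_mul_iff_one_le_right (by norm_num : (0:ℝ) < 2),
                  ← div_le_iff₀ (by positivity)]
                exact one_div_le_one_div_of_le (by positivity) this
  apply Summable.of_nonneg_of_le (fun k => abs_nonneg _) hbound
  apply Summable.mul_left
  have : Summable (fun n : ℕ => 1 / (n : ℝ) ^ 2) := Real.summable_one_div_nat_pow.mpr one_lt_two
  have := (summable_nat_add_iff 1).mpr this
  exact this.congr (fun k => by push_cast; ring)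

lemma summable_w (β : ℝ) (hβ1 : 1 < β) (hβ2 : β < 2) :
    Summable (fun k : ℕ => w β k) := by
  have hg := summable_gcoef β hβ1 hβ2
  have hv : Summable (fun k : ℕ => match k with | 0 => (0:ℝ) | m + 1 => gcoef β m) := by
    rw [← summable_nat_add_iff 1]
    exact hg.congr (fun k => rfl)
  have := (hg.mul_left (β / 2)).add (hv.mul_left ((2 - β) / 2))
  apply this.congr
  intro k
  cases k with
  | zero => simp [w]
  | succ m => simp [w]

lemma sum_w_eq (β : ℝ) (n : ℕ) :
    ∑ k ∈ Finset.range (n + 2), w β k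
      = β / 2 * gcoef (β - 1) (n + 1) + (2 - β) / 2 * gcoef (β - 1) n := by
  induction n with
  | zero =>
    simp [Finset.sum_range_succ, w, gcoef]
    ring
  | succ n ih =>
    rw [Finset.sum_range_succ, ih]
    show _ + w β ((n + 1) + 1) = _
    rw [show w β ((n + 1) + 1) = β / 2 * gcoef β (n + 2) + (2 - β) / 2 * gcoef β (n + 1)
      from rfl]
    rw [show n + 2 = (n + 1) + 1 from rfl, gcoef_eq_sub β (n + 1), gcoef_eq_sub β n]
    ring

theorem wsgd_hasSum_zero (β : ℝ) (hβ1 : 1 < β) (hβ2 : β < 2) :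
    HasSum (fun k : ℕ => w β k) 0 := by
  have hsum := summable_w β hβ1 hβ2
  have hpartial : Filter.Tendsto (fun n : ℕ => ∑ k ∈ Finset.range n, w β k)
      Filter.atTop (nhds 0) := by
    rw [← Filter.tendsto_add_atTop_iff_nat 2]
    have h0 := gcoefm_tendsto β hβ1 hβ2
    have h1 : Filter.Tendsto (fun n : ℕ => gcoef (β - 1) (n + 1)) Filter.atTop (nhds 0) :=
      (Filter.tendsto_add_atTop_iff_nat 1).mpr h0
    have := ((h1.const_mul (β / 2)).add (h0.const_mul ((2 - β) / 2)))
    simp only [mul_zero, add_zero] at this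
    exact Filter.Tendsto.congr (fun n => (sum_w_eq β n).symm) this
  have ht := hsum.hasSum.tendsto_sum_nat
  exact (tendsto_nhds_unique ht hpartial) ▸ hsum.hasSum
end

section
/- For every real number β with 1 < β < 2 and every integer N ≥ 2, the partial sum satisfies ∑_{k=0}^{N} ω_k^{(β)} < 0. -/
open scoped Matrix

/-- Auxiliary sequence: partial sums of `gcoef`. -/
noncomputable def Taux (β : ℝ) : ℕ → ℝ
  | 0 => 1
  | n + 1 => (1 - β / ((n : ℝ) + 1)) * Taux β n

lemma gcoef_eq_Taux (β : ℝ) : ∀ n : ℕ, gcoef β (n + 1) = -(β / ((n : ℝ) + 1)) * Taux β n := by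
  intro n
  induction n with
  | zero => simp [gcoef, Taux]
  | succ n ih =>
    have h1 : ((n : ℝ) + 1) ≠ 0 := by positivity
    have h2 : ((n : ℝ) + 1 + 1) ≠ 0 := by positivity
    have e1 : gcoef β (n + 2) = (1 - (β + 1) / ((n : ℝ) + 1 + 1)) * gcoef β (n + 1) := by
      simp [gcoef]
    have e2 : Taux β (n + 1) = (1 - β / ((n : ℝ) + 1)) * Taux β n := by
      simp [Taux]
    rw [e1, ih]
    show _ = -(β / (((n : ℕ) + 1 : ℕ) + 1 : ℝ)) * Taux β (n + 1)
    rw [e2]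
    push_cast
    field_simp
    ring
  
lemma gcoef_sub (β : ℝ) (n : ℕ) : gcoef β (n + 1) = Taux β (n + 1) - Taux β n := by
  rw [gcoef_eq_Taux]
  show _ = (1 - β / ((n : ℝ) + 1)) * Taux β n - Taux β n
  ring

lemma Taux_neg (β : ℝ) (hβ1 : 1 < β) (hβ2 : β < 2) : ∀ n : ℕ, Taux β (n + 1) < 0 := by
  intro n
  induction n with
  | zero =>
    show (1 - β / ((0 : ℕ) + 1 : ℝ)) * 1 < 0
    push_cast
    nlinarith
  | succ n ih =>
    show (1 - β / (((n : ℕ) + 1 : ℕ) + 1 : ℝ)) * Taux β (n + 1) < 0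
    apply mul_neg_of_pos_of_neg _ ih
    have hn : (2 : ℝ) ≤ ((n : ℕ) + 1 : ℕ) + 1 := by push_cast; linarith [Nat.cast_nonneg (α := ℝ) n]
    have hpos : (0 : ℝ) < ((n : ℕ) + 1 : ℕ) + 1 := by linarith
    have : β / (((n : ℕ) + 1 : ℕ) + 1 : ℝ) < 1 := by
      rw [div_lt_one hpos]; linarith
    linarith

lemma sum_w (β : ℝ) : ∀ n : ℕ,
    ∑ k ∈ Finset.range (n + 3), w β k = β / 2 * Taux β (n + 2) + (2 - β) / 2 * Taux β (n + 1) := by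
  intro n
  induction n with
  | zero =>
    rw [Finset.sum_range_succ, Finset.sum_range_succ, Finset.sum_range_one]
    have hw0 : w β 0 = β / 2 * 1 := rfl
    have hw1 : w β 1 = β / 2 * gcoef β 1 + (2 - β) / 2 * gcoef β 0 := rfl
    have hw2 : w β 2 = β / 2 * gcoef β 2 + (2 - β) / 2 * gcoef β 1 := rfl
    have hg0 : gcoef β 0 = 1 := rfl
    have hg1 : gcoef β 1 = Taux β 1 - Taux β 0 := gcoef_sub β 0
    have hg2 : gcoef β 2 = Taux β 2 - Taux β 1 := gcoef_sub β 1
    have hT0 : Taux β 0 = 1 := rfl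
    rw [hw0, hw1, hw2, hg0, hg1, hg2, hT0]
    ring
  | succ n ih =>
    rw [Finset.sum_range_succ, ih]
    have hw : w β (n + 3) = β / 2 * gcoef β (n + 3) + (2 - β) / 2 * gcoef β (n + 2) := rfl
    rw [hw, show n + 3 = (n + 2) + 1 from rfl, gcoef_sub, show n + 2 = (n + 1) + 1 from rfl,
      gcoef_sub]
    ring

theorem wsgd_partial_sum_neg (β : ℝ) (hβ1 : 1 < β) (hβ2 : β < 2)
    (N : ℕ) (hN : 2 ≤ N) :
    ∑ k ∈ Finset.range (N + 1), w β k < 0 := by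
  obtain ⟨M, rfl⟩ : ∃ M, N = M + 2 := ⟨N - 2, by omega⟩
  rw [show M + 2 + 1 = M + 3 from rfl, sum_w]
  have hT : Taux β (M + 1) < 0 := Taux_neg β hβ1 hβ2 M
  have hT2 : Taux β (M + 2) = (1 - β / ((M : ℝ) + 1 + 1)) * Taux β (M + 1) := by
    show Taux β ((M + 1) + 1) = _
    simp [Taux]
  rw [hT2]
  have hM : (0 : ℝ) < (M : ℝ) + 1 + 1 := by positivity
  have key : β / 2 * (1 - β / ((M : ℝ) + 1 + 1)) + (2 - β) / 2 = 1 - β ^ 2 / (2 * ((M : ℝ) + 1 + 1)) := by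
    field_simp
    ring
  have hfac : (0 : ℝ) < 1 - β ^ 2 / (2 * ((M : ℝ) + 1 + 1)) := by
    have : β ^ 2 / (2 * ((M : ℝ) + 1 + 1)) < 1 := by
      rw [div_lt_one (by positivity)]
      nlinarith [Nat.cast_nonneg (α := ℝ) M]
    linarith
  nlinarith [mul_pos hfac (neg_pos.mpr hT)]
end

section
/- For every integer N ≥ 3, every real β with 1 < β < 2, and all reals e_1, e_2 > 0, the real symmetric matrix H = (K_N + K_N^T)/2 is negative definite; equivalently, all eigenvalues of H are strictly negative. -/
open scoped Matrix

/-- The `(N−1) × (N−1)` lower Hessenberg Toeplitz matrix `G_β`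
(1-based entry `(i,j)` equals `ω_{i−j+1}` when `i − j + 1 ≥ 0`, else `0`). -/
noncomputable def Gmat (β : ℝ) (N : ℕ) : Matrix (Fin (N - 1)) (Fin (N - 1)) ℝ :=
  Matrix.of fun i j => if (j : ℕ) ≤ (i : ℕ) + 1 then w β ((i : ℕ) + 1 - (j : ℕ)) else 0

/-- `K_N = e₁·G_β + e₂·G_βᵀ`. -/
noncomputable def Kmat (β e1 e2 : ℝ) (N : ℕ) : Matrix (Fin (N - 1)) (Fin (N - 1)) ℝ :=
  e1 • Gmat β N + e2 • (Gmat β N)ᵀ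

open Finset

section coeffs

variable {β : ℝ} (hβ1 : 1 < β) (hβ2 : β < 2)

lemma gcoef_one : gcoef β 1 = -β := by
  have h : gcoef β 1 = (1 - (β + 1) / ((0 : ℕ) + 1 : ℝ)) * 1 := rfl
  rw [h]; push_cast; ring

lemma gcoef_two : gcoef β 2 = β * (β - 1) / 2 := by
  show (1 - (β + 1) / ((1 : ℕ) + 1 : ℝ)) * gcoef β 1 = _
  rw [gcoef_one]; push_cast; ring

include hβ1 hβ2 in
lemma gcoef_pos : ∀ k, 2 ≤ k → 0 < gcoef β k := by
  intro k hk
  induction k, hk using Nat.le_induction with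
  | base => rw [gcoef_two]; nlinarith
  | succ k hk ih =>
      show 0 < (1 - (β + 1) / ((k : ℝ) + 1)) * gcoef β k
      have hk2 : (2 : ℝ) ≤ (k : ℝ) := by exact_mod_cast hk
      have h1 : (β + 1) / ((k : ℝ) + 1) < 1 := by
        rw [div_lt_one (by linarith)]; linarith
      exact mul_pos (by linarith) ih

include hβ1 hβ2 in
lemma w_pos : ∀ k, 3 ≤ k → 0 < w β k := by
  intro k hk
  obtain ⟨m, rfl⟩ : ∃ m, k = m + 1 := ⟨k - 1, by omega⟩
  show 0 < β / 2 * gcoef β (m + 1) + (2 - β) / 2 * gcoef β m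
  have h1 : 0 < gcoef β (m + 1) := gcoef_pos hβ1 hβ2 _ (by omega)
  have h2 : 0 < gcoef β m := gcoef_pos hβ1 hβ2 _ (by omega)
  have : 0 < β / 2 := by linarith
  have : 0 < (2 - β) / 2 := by linarith
  positivity

include hβ1 in
lemma w_one_neg : w β 1 < 0 := by
  show β / 2 * gcoef β 1 + (2 - β) / 2 * gcoef β 0 < 0
  rw [gcoef_one]
  show β / 2 * -β + (2 - β) / 2 * 1 < 0
  nlinarith

include hβ1 hβ2 in
lemma w_zero_add_two_pos : 0 < w β 0 + w β 2 := by
  have h0 : w β 0 = β / 2 * 1 := rfl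
  have h2 : w β 2 = β / 2 * gcoef β 2 + (2 - β) / 2 * gcoef β 1 := rfl
  rw [h0, h2, gcoef_one, gcoef_two]
  nlinarith [mul_pos (mul_pos (show (0:ℝ) < β by linarith) (show (0:ℝ) < β - 1 by linarith))
    (show (0:ℝ) < β + 2 by linarith)]

include hβ1 in
lemma sum_gcoef (n : ℕ) :
    β * ∑ k ∈ range (n + 1), gcoef β k = -((n : ℝ) + 1) * gcoef β (n + 1) := by
  induction n with
  | zero =>
      rw [sum_range_one, gcoef_one]
      have h : gcoef β 0 = 1 := rfl
      rw [h]; push_cast; ring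
  | succ n ih =>
      rw [sum_range_succ, mul_add, ih]
      have hne : ((n : ℝ) + 2) ≠ 0 := by positivity
      have hunf : gcoef β (n + 1 + 1)
          = (1 - (β + 1) / (((n + 1 : ℕ) : ℝ) + 1)) * gcoef β (n + 1) := rfl
      rw [hunf]
      push_cast
      field_simp
      ring

include hβ1 hβ2 in
lemma sum_gcoef_neg (n : ℕ) (hn : 1 ≤ n) : ∑ k ∈ range (n + 1), gcoef β k < 0 := by
  have h := sum_gcoef (β := β) hβ1 n
  have hg : 0 < gcoef β (n + 1) := gcoef_pos hβ1 hβ2 _ (by omega)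
  have hβ0 : 0 < β := by linarith
  nlinarith [mul_pos (show (0:ℝ) < (n : ℝ) + 1 by positivity) hg]

lemma sum_w_formula (n : ℕ) :
    ∑ k ∈ range (n + 2), w β k =
      β / 2 * ∑ k ∈ range (n + 2), gcoef β k
        + (2 - β) / 2 * ∑ k ∈ range (n + 1), gcoef β k := by
  induction n with
  | zero =>
      simp only [show (0:ℕ)+2 = 2 from rfl, Finset.sum_range_succ, Finset.sum_range_zero]
      have h0 : w β 0 = β / 2 * gcoef β 0 := rfl
      have h1 : w β 1 = β / 2 * gcoef β 1 + (2 - β) / 2 * gcoef β 0 := rfl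
      rw [h0, h1]; ring
  | succ n ih =>
      rw [show n+1+2 = (n+2)+1 by ring, sum_range_succ, ih, sum_range_succ (n := n + 2),
        sum_range_succ (n := n + 1)]
      have hw : w β (n + 2) = β / 2 * gcoef β (n + 2) + (2 - β) / 2 * gcoef β (n + 1) := rfl
      rw [hw]; ring

include hβ1 hβ2 in
lemma sum_w_neg (n : ℕ) (hn : 2 ≤ n) : ∑ k ∈ range (n + 1), w β k < 0 := by
  obtain ⟨m, rfl⟩ : ∃ m, n = m + 1 := ⟨n - 1, by omega⟩
  rw [show m + 1 + 1 = m + 2 by ring, sum_w_formula]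
  have h1 : ∑ k ∈ range (m + 2), gcoef β k < 0 := sum_gcoef_neg hβ1 hβ2 (m + 1) (by omega)
  have h2 : ∑ k ∈ range (m + 1), gcoef β k < 0 := sum_gcoef_neg hβ1 hβ2 m (by omega)
  nlinarith

end coeffs

section sums

/-- Summing `f (m - b)` over a truncated band. -/
lemma sum_ite_left (f : ℕ → ℝ) (n m : ℕ) (hm : m + 1 ≤ n) :
    ∑ b ∈ range n, (if b ≤ m then f (m - b) else 0) = ∑ k ∈ range (m + 1), f k := by
  rw [← Finset.sum_subset (Finset.range_subset_range.2 hm)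
      (fun x _ hx => by rw [if_neg (by simp only [mem_range] at hx; omega)])]
  rw [Finset.sum_congr rfl (fun x hx => by
    rw [if_pos (by simp only [mem_range] at hx; omega)])]
  have := Finset.sum_range_reflect f (m + 1)
  simpa using this

lemma sum_ite_left_full (f : ℕ → ℝ) (n : ℕ) :
    ∑ b ∈ range n, (if b ≤ n then f (n - b) else 0)
      = ∑ k ∈ range (n + 1), f k - f 0 := by
  rw [Finset.sum_congr rfl (fun x hx => by
    rw [if_pos (by simp only [mem_range] at hx; omega)])]
  have h1 := Finset.sum_range_reflect f (n + 1)
  rw [Finset.sum_range_succ] at h1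
  simp only [Nat.add_sub_cancel] at h1
  rw [show n - n = 0 by omega] at h1
  have : ∑ b ∈ range n, f (n - b) = ∑ j ∈ range n, f (n + 1 - 1 - j) := by
    apply Finset.sum_congr rfl; intro x hx; congr 1
  rw [this]
  linarith [h1]

/-- Summing `f (b + 1 - c)` over the upper band, `1 ≤ c ≤ n`. -/
lemma sum_ite_right (f : ℕ → ℝ) (n c : ℕ) (hc1 : 1 ≤ c) (hcn : c ≤ n) :
    ∑ b ∈ range n, (if c ≤ b + 1 then f (b + 1 - c) else 0)
      = ∑ k ∈ range (n - c + 1), f k := by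
  rw [Finset.range_eq_Ico, ← Finset.sum_Ico_consecutive _ (Nat.zero_le (c - 1)) (by omega)]
  have h1 : ∑ b ∈ Finset.Ico 0 (c - 1), (if c ≤ b + 1 then f (b + 1 - c) else 0) = 0 := by
    apply Finset.sum_eq_zero; intro x hx
    rw [Finset.mem_Ico] at hx
    rw [if_neg (by omega)]
  rw [h1, zero_add]
  rw [Finset.sum_Ico_eq_sum_range]
  rw [show n - (c - 1) = n - c + 1 by omega]
  apply Finset.sum_congr rfl
  intro x hx
  rw [if_pos (by omega)]
  congr 1
  omega

lemma sum_ite_right_zero (f : ℕ → ℝ) (n : ℕ) :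
    ∑ b ∈ range n, (if 0 ≤ b + 1 then f (b + 1 - 0) else 0)
      = ∑ k ∈ range (n + 1), f k - f 0 := by
  simp only [Nat.zero_le, if_true, Nat.sub_zero]
  rw [Finset.sum_range_succ' f n]
  ring

end sums

section posdef

/-- A symmetric real matrix with nonnegative off-diagonal entries and
negative row sums has negative definite symmetric part. -/
lemma negdef_of_rowsum {n : ℕ} (A : Matrix (Fin n) (Fin n) ℝ)
    (hsym : Aᵀ = A) (hoff : ∀ i j : Fin n, i ≠ j → 0 ≤ A i j)
    (hrow : ∀ i, ∑ j, A i j < 0) : (-A).PosDef := by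
  have hsym' : ∀ i j, A j i = A i j := fun i j => by
    have h := congrFun (congrFun hsym j) i
    simpa [Matrix.transpose_apply] using h.symm
  rw [Matrix.posDef_iff_dotProduct_mulVec]
  constructor
  · show (-A)ᴴ = -A
    have hAH : Aᴴ = A := by
      ext i j
      simpa [Matrix.conjTranspose_apply] using hsym' i j
    rw [Matrix.conjTranspose_neg, hAH]
  · intro x hx
    have key : ∑ i, ∑ j, A i j * (x i * x j) < 0 := by
      have step1 : ∑ i, ∑ j, A i j * (x i * x j)
          ≤ ∑ i, ∑ j, A i j * ((x i ^ 2 + x j ^ 2) / 2) := by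
        apply Finset.sum_le_sum; intro i _
        apply Finset.sum_le_sum; intro j _
        rcases eq_or_ne i j with rfl | hij
        · apply le_of_eq; ring
        · exact mul_le_mul_of_nonneg_left (by nlinarith [sq_nonneg (x i - x j)])
            (hoff i j hij)
      have step2 : ∑ i, ∑ j, A i j * ((x i ^ 2 + x j ^ 2) / 2)
          = ∑ i, (x i ^ 2) * ∑ j, A i j := by
        have e1 : ∀ i j : Fin n, A i j * ((x i ^ 2 + x j ^ 2) / 2)
            = A i j * x i ^ 2 / 2 + A i j * x j ^ 2 / 2 := fun i j => by ring
        simp_rw [e1, Finset.sum_add_distrib]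
        rw [Finset.sum_comm (f := fun i j => A i j * x j ^ 2 / 2)]
        have e2 : ∀ j i : Fin n, A i j * x j ^ 2 / 2 = A j i * x j ^ 2 / 2 := fun j i => by
          rw [hsym' j i]
        simp_rw [e2]
        rw [← Finset.sum_add_distrib]
        apply Finset.sum_congr rfl
        intro i _
        rw [Finset.mul_sum]
        rw [← Finset.sum_add_distrib]
        apply Finset.sum_congr rfl
        intro j _
        ring
      have step3 : ∑ i, (x i ^ 2) * ∑ j, A i j < 0 := by
        obtain ⟨i0, hi0⟩ : ∃ i, x i ≠ 0 := Function.ne_iff.1 hx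
        have : ∑ i, (x i ^ 2) * ∑ j, A i j < ∑ _i : Fin n, (0 : ℝ) := by
          apply Finset.sum_lt_sum
          · intro i _
            exact mul_nonpos_of_nonneg_of_nonpos (sq_nonneg _) (hrow i).le
          · exact ⟨i0, Finset.mem_univ _,
              mul_neg_of_pos_of_neg (by positivity) (hrow i0)⟩
        simpa using this
      linarith
    have expand : star x ⬝ᵥ ((-A) *ᵥ x)
        = -∑ i, ∑ j, A i j * (x i * x j) := by
      simp only [star_trivial, dotProduct, Matrix.mulVec, Matrix.neg_apply,
        Finset.mul_sum, ← Finset.sum_neg_distrib]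
      apply Finset.sum_congr rfl; intro i _
      apply Finset.sum_congr rfl; intro j _
      ring
    rw [expand]
    linarith

end posdef

theorem symmetric_part_negative_definite (N : ℕ) (hN : 3 ≤ N)
    (β e1 e2 : ℝ) (hβ1 : 1 < β) (hβ2 : β < 2) (he1 : 0 < e1) (he2 : 0 < e2) :
    (-((2⁻¹ : ℝ) • (Kmat β e1 e2 N + (Kmat β e1 e2 N)ᵀ))).PosDef ∧
    ∀ μ ∈ spectrum ℝ ((2⁻¹ : ℝ) • (Kmat β e1 e2 N + (Kmat β e1 e2 N)ᵀ)), μ < 0 := by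
  have hn2 : 2 ≤ N - 1 := by omega
  set n := N - 1 with hn
  set A : Matrix (Fin n) (Fin n) ℝ := Gmat β N + (Gmat β N)ᵀ with hA
  -- symmetry of A
  have hsym : Aᵀ = A := by
    rw [hA, Matrix.transpose_add, Matrix.transpose_transpose, add_comm]
  -- entries of A
  have hentry : ∀ i j : Fin n, A i j
      = (if (j : ℕ) ≤ (i : ℕ) + 1 then w β ((i : ℕ) + 1 - (j : ℕ)) else 0)
        + (if (i : ℕ) ≤ (j : ℕ) + 1 then w β ((j : ℕ) + 1 - (i : ℕ)) else 0) := by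
    intro i j
    rfl
  -- off-diagonal entries of A are nonnegative
  have hoff : ∀ i j : Fin n, i ≠ j → 0 ≤ A i j := by
    intro i j hij
    have hij' : (i : ℕ) ≠ (j : ℕ) := fun h => hij (Fin.ext h)
    rw [hentry]
    rcases (by omega : (j : ℕ) + 2 ≤ i ∨ (i : ℕ) = j + 1 ∨ (j : ℕ) = i + 1 ∨ (i : ℕ) + 2 ≤ j)
      with h | h | h | h
    · rw [if_pos (by omega), if_neg (by omega)]
      have := w_pos hβ1 hβ2 ((i : ℕ) + 1 - j) (by omega)
      linarith
    · rw [if_pos (by omega), if_pos (by omega),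
        show (i : ℕ) + 1 - j = 2 by omega, show (j : ℕ) + 1 - i = 0 by omega]
      linarith [w_zero_add_two_pos hβ1 hβ2]
    · rw [if_pos (by omega), if_pos (by omega),
        show (i : ℕ) + 1 - j = 0 by omega, show (j : ℕ) + 1 - i = 2 by omega]
      linarith [w_zero_add_two_pos hβ1 hβ2]
    · rw [if_neg (by omega), if_pos (by omega)]
      have := w_pos hβ1 hβ2 ((j : ℕ) + 1 - i) (by omega)
      linarith
  -- row sums of A are negative
  have hrow : ∀ i : Fin n, ∑ j, A i j < 0 := by
    intro i
    have hi : (i : ℕ) < n := i.2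
    have hsplit : ∑ j, A i j
        = (∑ b ∈ range n, (if b ≤ (i : ℕ) + 1 then w β ((i : ℕ) + 1 - b) else 0))
          + (∑ b ∈ range n, (if (i : ℕ) ≤ b + 1 then w β (b + 1 - (i : ℕ)) else 0)) := by
      rw [← Finset.sum_add_distrib]
      rw [← Fin.sum_univ_eq_sum_range (fun b =>
        (if b ≤ (i : ℕ) + 1 then w β ((i : ℕ) + 1 - b) else 0)
          + (if (i : ℕ) ≤ b + 1 then w β (b + 1 - (i : ℕ)) else 0)) n]
      apply Finset.sum_congr rfl
      intro j _
      rw [hentry]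
    rw [hsplit]
    have hWneg : ∀ m : ℕ, 3 ≤ m → ∑ k ∈ range m, w β k < 0 := by
      intro m hm
      obtain ⟨m', rfl⟩ : ∃ m', m = m' + 1 := ⟨m - 1, by omega⟩
      exact sum_w_neg hβ1 hβ2 m' (by omega)
    rcases (by omega : (i : ℕ) = 0 ∨ (i : ℕ) = n - 1 ∨
        (1 ≤ (i : ℕ) ∧ (i : ℕ) + 1 ≤ n - 1)) with h | h | ⟨h1, h2⟩
    · rw [h]
      rw [sum_ite_left (w β) n 1 (by omega), sum_ite_right_zero (w β) n]
      have hW : ∑ k ∈ range (n + 1), w β k < 0 := hWneg _ (by omega)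
      have h01 : ∑ k ∈ range 2, w β k = w β 0 + w β 1 := by
        rw [sum_range_succ, sum_range_one]
      rw [h01]
      have := w_one_neg (β := β) hβ1
      linarith
    · rw [h, show n - 1 + 1 = n by omega]
      rw [sum_ite_left_full (w β) n, sum_ite_right (w β) n (n - 1) (by omega) (by omega)]
      rw [show n - (n - 1) + 1 = 2 by omega]
      have hW : ∑ k ∈ range (n + 1), w β k < 0 := hWneg _ (by omega)
      have h01 : ∑ k ∈ range 2, w β k = w β 0 + w β 1 := by
        rw [sum_range_succ, sum_range_one]
      rw [h01]
      have := w_one_neg (β := β) hβ1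
      linarith
    · rw [sum_ite_left (w β) n ((i : ℕ) + 1) (by omega),
        sum_ite_right (w β) n (i : ℕ) (by omega) (by omega)]
      have hW1 : ∑ k ∈ range ((i : ℕ) + 1 + 1), w β k < 0 := hWneg _ (by omega)
      have hW2 : ∑ k ∈ range (n - (i : ℕ) + 1), w β k < 0 := hWneg _ (by omega)
      linarith
  have hAneg : (-A).PosDef := negdef_of_rowsum A hsym hoff hrow
  -- relate the symmetric part of K to A
  set M : Matrix (Fin n) (Fin n) ℝ :=
    (2⁻¹ : ℝ) • (Kmat β e1 e2 N + (Kmat β e1 e2 N)ᵀ) with hM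
  have hMA : M = ((e1 + e2) / 2) • A := by
    rw [hM, hA]
    unfold Kmat
    ext i j
    simp [Matrix.add_apply, Matrix.smul_apply, Matrix.transpose_apply]
    ring
  have hc : (0 : ℝ) < (e1 + e2) / 2 := by linarith
  have hMneg : (-M).PosDef := by
    rw [hMA]
    have heq : -(((e1 + e2) / 2) • A) = ((e1 + e2) / 2) • (-A) := by
      rw [smul_neg]
    rw [heq]
    rw [Matrix.posDef_iff_dotProduct_mulVec]
    constructor
    · show (((e1 + e2) / 2) • (-A))ᴴ = ((e1 + e2) / 2) • (-A)
      rw [Matrix.conjTranspose_smul, hAneg.1, star_trivial]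
    · intro x hx
      rw [Matrix.smul_mulVec, dotProduct_smul]
      have := hAneg.dotProduct_mulVec_pos hx
      exact mul_pos hc this
  refine ⟨hMneg, ?_⟩
  intro μ hμ
  by_contra hcon
  push_neg at hcon
  rw [spectrum.mem_iff] at hμ
  apply hμ
  have hrw : algebraMap ℝ (Matrix (Fin n) (Fin n) ℝ) μ - M = μ • 1 + (-M) := by
    rw [Algebra.algebraMap_eq_smul_one, sub_eq_add_neg]
  rw [hrw]
  have hsemi : (μ • (1 : Matrix (Fin n) (Fin n) ℝ)).PosSemidef := by
    rw [Matrix.posSemidef_iff_dotProduct_mulVec]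
    constructor
    · show (μ • (1 : Matrix (Fin n) (Fin n) ℝ))ᴴ = μ • 1
      rw [Matrix.conjTranspose_smul, Matrix.conjTranspose_one, star_trivial]
    · intro x
      rw [Matrix.smul_mulVec, dotProduct_smul, Matrix.one_mulVec]
      have : (0 : ℝ) ≤ star x ⬝ᵥ x := by
        simp only [star_trivial, dotProduct]
        exact Finset.sum_nonneg fun i _ => mul_self_nonneg _
      exact smul_nonneg hcon this
  exact (Matrix.PosDef.posSemidef_add hsemi hMneg).isUnit
end

section
/- For every real β with 1 < β < 2 and every integer N ≥ 4, the Gershgorin radius estimate 2·(ω_0^{(β)} + ω_2^{(β)}) + ∑_{k=3}^{N−2} |ω_k^{(β)} − ω_{N+1−k}^{(β)}| ≤ −2·ω_1^{(β)} holds (the sum being 0 when N = 4). -/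
open scoped Matrix

lemma gcoef_succ_eq (β : ℝ) (n : ℕ) :
    gcoef β (n + 1) = -(β / (n + 1)) * ∑ k ∈ Finset.range (n + 1), gcoef β k := by
  induction n with
  | zero => simp [gcoef]
  | succ n ih =>
    have h1 : ((n : ℝ) + 1) ≠ 0 := by positivity
    have h2 : ((n : ℝ) + 2) ≠ 0 := by positivity
    have hdef : gcoef β (n + 2) = (1 - (β + 1) / ((n : ℝ) + 1 + 1)) * gcoef β (n + 1) := by
      rw [show (n + 2) = (n + 1) + 1 from rfl, gcoef]
      push_cast
      ring_nf
    rw [Finset.sum_range_succ, hdef, ih]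
    push_cast
    field_simp
    ring

lemma gsum_nonpos (β : ℝ) (hβ1 : 1 < β) (hβ2 : β < 2) (n : ℕ) (hn : 1 ≤ n) :
    ∑ k ∈ Finset.range (n + 1), gcoef β k ≤ 0 := by
  induction n with
  | zero => omega
  | succ n ih =>
    rcases Nat.eq_or_lt_of_le hn with h | h
    · have : n = 0 := by omega
      subst this
      simp [Finset.sum_range_succ, gcoef]
      nlinarith
    · have hn' : 1 ≤ n := by omega
      have hS := ih hn'
      rw [Finset.sum_range_succ, gcoef_succ_eq]
      have hfac : 0 ≤ 1 - β / ((n : ℝ) + 1) := by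
        have : (2 : ℝ) ≤ (n : ℝ) + 1 := by
          have : (1 : ℝ) ≤ (n : ℝ) := by exact_mod_cast hn'
          linarith
        rw [sub_nonneg, div_le_one (by linarith)]
        linarith
      have hpos : (0:ℝ) < (n : ℝ) + 1 := by positivity
      have : ∑ k ∈ Finset.range (n + 1), gcoef β k + -(β / ((n:ℝ) + 1)) * ∑ k ∈ Finset.range (n + 1), gcoef β k
          = (1 - β / ((n:ℝ) + 1)) * ∑ k ∈ Finset.range (n + 1), gcoef β k := by ring
      rw [this]
      exact mul_nonpos_of_nonneg_of_nonpos hfac hS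

lemma gcoef_nonneg (β : ℝ) (hβ1 : 1 < β) (hβ2 : β < 2) (k : ℕ) (hk : 2 ≤ k) :
    0 ≤ gcoef β k := by
  obtain ⟨j, rfl⟩ : ∃ j, k = j + 2 := ⟨k - 2, by omega⟩
  clear hk
  induction j with
  | zero =>
    simp [gcoef]
    nlinarith
  | succ j ih =>
    have hdef : gcoef β (j + 3) = (1 - (β + 1) / ((j : ℝ) + 2 + 1)) * gcoef β (j + 2) := by
      rw [show (j + 3) = (j + 2) + 1 from rfl, gcoef]
      push_cast
      ring_nf
    rw [hdef]
    apply mul_nonneg _ ih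
    have h3 : (3 : ℝ) ≤ (j : ℝ) + 3 := by
      have : (0:ℝ) ≤ (j:ℝ) := Nat.cast_nonneg j
      linarith
    rw [sub_nonneg, div_le_one (by linarith)]
    linarith

lemma w_nonneg (β : ℝ) (hβ1 : 1 < β) (hβ2 : β < 2) (k : ℕ) (hk : 3 ≤ k) :
    0 ≤ w β k := by
  obtain ⟨j, rfl⟩ : ∃ j, k = (j + 2) + 1 := ⟨k - 3, by omega⟩
  rw [w]
  have h1 := gcoef_nonneg β hβ1 hβ2 (j + 2 + 1) (by omega)
  have h2 := gcoef_nonneg β hβ1 hβ2 (j + 2) (by omega)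
  have hb : 0 ≤ β / 2 := by linarith
  have hb2 : 0 ≤ (2 - β) / 2 := by linarith
  positivity

lemma wsum_eq (β : ℝ) (m : ℕ) :
    ∑ k ∈ Finset.range (m + 2), w β k =
      β / 2 * ∑ k ∈ Finset.range (m + 2), gcoef β k +
        (2 - β) / 2 * ∑ k ∈ Finset.range (m + 1), gcoef β k := by
  induction m with
  | zero => simp [Finset.sum_range_succ, w]; ring
  | succ m ih =>
    rw [show m + 1 + 2 = (m + 2) + 1 from rfl, Finset.sum_range_succ, ih,
      Finset.sum_range_succ (f := gcoef β) (n := m + 2),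
      Finset.sum_range_succ (f := gcoef β) (n := m + 1)]
    rw [show (m + 2 : ℕ) = (m + 1) + 1 from rfl, w]
    ring

lemma wsum_nonpos (β : ℝ) (hβ1 : 1 < β) (hβ2 : β < 2) (m : ℕ) (hm : 1 ≤ m) :
    ∑ k ∈ Finset.range (m + 2), w β k ≤ 0 := by
  rw [wsum_eq]
  have h1 : ∑ k ∈ Finset.range (m + 2), gcoef β k ≤ 0 := by
    have := gsum_nonpos β hβ1 hβ2 (m + 1) (by omega)
    simpa using this
  have h2 : ∑ k ∈ Finset.range (m + 1), gcoef β k ≤ 0 := gsum_nonpos β hβ1 hβ2 m hm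
  have hb : 0 ≤ β / 2 := by linarith
  have hb2 : 0 ≤ (2 - β) / 2 := by linarith
  nlinarith

theorem gershgorin_radius_estimate (β : ℝ) (hβ1 : 1 < β) (hβ2 : β < 2)
    (N : ℕ) (hN : 4 ≤ N) :
    2 * (w β 0 + w β 2) + ∑ k ∈ Finset.Icc 3 (N - 2), |w β k - w β (N + 1 - k)| ≤
      -2 * w β 1 := by
  -- Step 1: bound each |w k - w (N+1-k)| by w k + w (N+1-k)
  have hstep1 : ∑ k ∈ Finset.Icc 3 (N - 2), |w β k - w β (N + 1 - k)| ≤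
      ∑ k ∈ Finset.Icc 3 (N - 2), (w β k + w β (N + 1 - k)) := by
    apply Finset.sum_le_sum
    intro k hk
    rw [Finset.mem_Icc] at hk
    have h1 : 0 ≤ w β k := w_nonneg β hβ1 hβ2 k hk.1
    have h2 : 0 ≤ w β (N + 1 - k) := w_nonneg β hβ1 hβ2 _ (by omega)
    exact abs_le.mpr ⟨by linarith, by linarith⟩
  -- Step 2: reindexing
  have hswap : ∑ k ∈ Finset.Icc 3 (N - 2), w β (N + 1 - k) =
      ∑ k ∈ Finset.Icc 3 (N - 2), w β k := by
    apply Finset.sum_nbij' (i := fun k => N + 1 - k) (j := fun k => N + 1 - k)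
    all_goals intro a ha
    all_goals simp only [Finset.mem_Icc] at *
    all_goals try omega
  have hstep2 : ∑ k ∈ Finset.Icc 3 (N - 2), (w β k + w β (N + 1 - k)) =
      2 * ∑ k ∈ Finset.Icc 3 (N - 2), w β k := by
    rw [Finset.sum_add_distrib, hswap]; ring
  -- Step 3: splitting range (N-1)
  have hIcc : Finset.Icc 3 (N - 2) = Finset.Ico 3 (N - 1) := by
    rw [show N - 1 = (N - 2) + 1 by omega, Finset.Ico_add_one_right_eq_Icc]
  have hsplit : ∑ k ∈ Finset.range 3, w β k + ∑ k ∈ Finset.Ico 3 (N - 1), w β k =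
      ∑ k ∈ Finset.range (N - 1), w β k := by
    rw [Finset.range_eq_Ico, Finset.range_eq_Ico]
    exact Finset.sum_Ico_consecutive (w β) (m := 0) (n := 3) (k := N - 1) (by omega) (by omega)
  have hW : ∑ k ∈ Finset.range (N - 1), w β k ≤ 0 := by
    have := wsum_nonpos β hβ1 hβ2 (N - 3) (by omega)
    rw [show N - 3 + 2 = N - 1 by omega] at this
    exact this
  have hr3 : ∑ k ∈ Finset.range 3, w β k = w β 0 + w β 1 + w β 2 := by
    simp [Finset.sum_range_succ]
  rw [hIcc] at hstep1 hstep2 ⊢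
  linarith [hstep1, hstep2, hsplit, hW]
end
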